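/- For integers P ≥ 1 and n with 1 ≤ n ≤ P, define T_n^{(P)}(x) = ∫_{ℝ²} e^{2πi x(ξ₁+ξ₂)} 1_{[−2P,0]}(ξ₁) 1_{[0,1/2]}(ξ₂) 1_{[n,n+1]}(ξ₂−ξ₁) dξ₁ dξ₂ (an absolutely convergent integral over a bounded region). Then: (i) for every integer P ≥ 1, every integer n with 1 ≤ n ≤ P, and every x ∈ ℝ, T_n^{(P)}(x) = e^{−2πi(n−1)x} · T_1^{(1)}(x); consequently (ii) for every r ∈ (0, ∞), ‖ ( Σ_{n=1}^{P} |T_n^{(P)}|² )^{1/2} ‖_{L^r(ℝ)} = P^{1/2} ‖ T_1^{(1)} ‖_{L^r(ℝ)}. -/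

import Mathlib

open MeasureTheory Real Set
open scoped ENNReal

/-- `T_n^{(P)}(x) = ∫∫ e^{2πix(ξ₁+ξ₂)} 1_{[-2P,0]}(ξ₁) 1_{[0,1/2]}(ξ₂)
1_{[n,n+1]}(ξ₂-ξ₁) dξ₁ dξ₂`. -/
noncomputable def T (P n : ℤ) (x : ℝ) : ℂ :=
  ∫ ξ : ℝ × ℝ, Complex.exp (((2 * Real.pi * x * (ξ.1 + ξ.2) : ℝ) : ℂ) * Complex.I) *
    (Set.Icc (-(2 * (P : ℝ))) 0).indicator 1 ξ.1 *
    (Set.Icc (0 : ℝ) (1 / 2)).indicator 1 ξ.2 *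
    (Set.Icc (n : ℝ) ((n : ℝ) + 1)).indicator 1 (ξ.2 - ξ.1)

lemma T_mod (P n : ℤ) (hP : 1 ≤ P) (hn1 : 1 ≤ n) (hnP : n ≤ P) (x : ℝ) :
    T P n x =
      Complex.exp (((-2 * Real.pi * ((n : ℝ) - 1) * x : ℝ) : ℂ) * Complex.I) * T 1 1 x := by
  have hP' : (1 : ℝ) ≤ (P : ℝ) := by exact_mod_cast hP
  have hn1' : (1 : ℝ) ≤ (n : ℝ) := by exact_mod_cast hn1
  have hnP' : (n : ℝ) ≤ (P : ℝ) := by exact_mod_cast hnP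
  set c : ℂ := Complex.exp (((-2 * Real.pi * ((n : ℝ) - 1) * x : ℝ) : ℂ) * Complex.I)
  set v : ℝ × ℝ := ((n : ℝ) - 1, 0)
  have key : ∀ ξ : ℝ × ℝ,
      (Complex.exp (((2 * Real.pi * x * (ξ.1 + ξ.2) : ℝ) : ℂ) * Complex.I) *
        (Set.Icc (-(2 * (P : ℝ))) 0).indicator 1 ξ.1 *
        (Set.Icc (0 : ℝ) (1 / 2)).indicator 1 ξ.2 *
        (Set.Icc (n : ℝ) ((n : ℝ) + 1)).indicator 1 (ξ.2 - ξ.1)) =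
      c * (Complex.exp (((2 * Real.pi * x * ((ξ + v).1 + (ξ + v).2) : ℝ) : ℂ) * Complex.I) *
        (Set.Icc (-(2 * ((1 : ℤ) : ℝ))) 0).indicator 1 (ξ + v).1 *
        (Set.Icc (0 : ℝ) (1 / 2)).indicator 1 (ξ + v).2 *
        (Set.Icc ((1 : ℤ) : ℝ) (((1 : ℤ) : ℝ) + 1)).indicator 1 ((ξ + v).2 - (ξ + v).1)) := by
    intro ξ
    obtain ⟨ξ₁, ξ₂⟩ := ξ
    simp only [Prod.fst_add, Prod.snd_add, v, Int.cast_one]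
    by_cases h2 : ξ₂ ∈ Set.Icc (0 : ℝ) (1 / 2)
    · by_cases h3 : ξ₂ - ξ₁ ∈ Set.Icc (n : ℝ) ((n : ℝ) + 1)
      · have h1 : ξ₁ ∈ Set.Icc (-(2 * (P : ℝ))) 0 := by
          constructor <;> [nlinarith [h2.1, h3.2]; nlinarith [h2.2, h3.1]]
        have h1' : ξ₁ + ((n : ℝ) - 1) ∈ Set.Icc (-(2 * (1 : ℝ))) 0 := by
          constructor <;> [nlinarith [h2.1, h3.2]; nlinarith [h2.2, h3.1]]
        have h3' : ξ₂ + 0 - (ξ₁ + ((n : ℝ) - 1)) ∈ Set.Icc (1 : ℝ) (1 + 1) := by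
          constructor <;> [nlinarith [h3.1]; nlinarith [h3.2]]
        have h2' : ξ₂ + (0 : ℝ) ∈ Set.Icc (0 : ℝ) (1 / 2) := by simpa using h2
        rw [Set.indicator_of_mem h1, Set.indicator_of_mem h2, Set.indicator_of_mem h3,
          Set.indicator_of_mem h1', Set.indicator_of_mem h2', Set.indicator_of_mem h3']
        simp only [Pi.one_apply, mul_one, c]
        rw [← Complex.exp_add]
        congr 1
        push_cast
        ring
      · have h3' : ¬ (ξ₂ + 0 - (ξ₁ + ((n : ℝ) - 1)) ∈ Set.Icc (1 : ℝ) (1 + 1)) := by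
          intro h; exact h3 ⟨by linarith [h.1], by linarith [h.2]⟩
        rw [Set.indicator_of_notMem h3, Set.indicator_of_notMem h3']
        ring
    · have h2' : ¬ (ξ₂ + (0 : ℝ) ∈ Set.Icc (0 : ℝ) (1 / 2)) := by simpa using h2
      rw [Set.indicator_of_notMem h2, Set.indicator_of_notMem h2']
      ring
  calc T P n x = ∫ ξ : ℝ × ℝ, c *
        (Complex.exp (((2 * Real.pi * x * ((ξ + v).1 + (ξ + v).2) : ℝ) : ℂ) * Complex.I) *
          (Set.Icc (-(2 * ((1 : ℤ) : ℝ))) 0).indicator 1 (ξ + v).1 *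
          (Set.Icc (0 : ℝ) (1 / 2)).indicator 1 (ξ + v).2 *
          (Set.Icc ((1 : ℤ) : ℝ) (((1 : ℤ) : ℝ) + 1)).indicator 1 ((ξ + v).2 - (ξ + v).1)) := by
        unfold T; exact integral_congr_ae (Filter.Eventually.of_forall key)
    _ = c * T 1 1 x := by
        rw [MeasureTheory.integral_const_mul]
        congr 1
        rw [integral_add_right_eq_self (μ := (volume : Measure (ℝ × ℝ)))
          (fun ξ : ℝ × ℝ => Complex.exp (((2 * Real.pi * x * (ξ.1 + ξ.2) : ℝ) : ℂ) * Complex.I) *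
            (Set.Icc (-(2 * ((1 : ℤ) : ℝ))) 0).indicator 1 ξ.1 *
            (Set.Icc (0 : ℝ) (1 / 2)).indicator 1 ξ.2 *
            (Set.Icc ((1 : ℤ) : ℝ) (((1 : ℤ) : ℝ) + 1)).indicator 1 (ξ.2 - ξ.1)) v]
        rfl

/-- **modulation invariance in the counterexample.**
(i) For `1 ≤ n ≤ P`, `T_n^{(P)}(x) = e^{-2πi(n-1)x} T_1^{(1)}(x)`; consequently
(ii) for every `r ∈ (0,∞)`,
`‖(Σ_{n=1}^P |T_n^{(P)}|²)^{1/2}‖_{L^r} = P^{1/2} ‖T_1^{(1)}‖_{L^r}`. -/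
theorem counterexample_modulation_invariance :
    (∀ P n : ℤ, 1 ≤ P → 1 ≤ n → n ≤ P → ∀ x : ℝ,
      T P n x =
        Complex.exp (((-2 * Real.pi * ((n : ℝ) - 1) * x : ℝ) : ℂ) * Complex.I) *
          T 1 1 x) ∧
    (∀ r : ℝ, 0 < r → ∀ P : ℤ, 1 ≤ P →
      eLpNorm (fun x : ℝ =>
          Real.sqrt (∑ n ∈ Finset.Icc (1 : ℤ) P, ‖T P n x‖ ^ 2))
          (ENNReal.ofReal r) volume =
        ENNReal.ofReal (Real.sqrt (P : ℝ)) *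
          eLpNorm (T 1 1) (ENNReal.ofReal r) volume) := by
  constructor
  · exact fun P n hP hn1 hnP x => T_mod P n hP hn1 hnP x
  · intro r hr P hP
    have hnorm : ∀ n : ℤ, 1 ≤ n → n ≤ P → ∀ x : ℝ, ‖T P n x‖ = ‖T 1 1 x‖ := by
      intro n hn1 hnP x
      rw [T_mod P n hP hn1 hnP x, norm_mul]
      have : ‖Complex.exp (((-2 * Real.pi * ((n : ℝ) - 1) * x : ℝ) : ℂ) * Complex.I)‖ = 1 := by
        rw [Complex.norm_exp]
        simp
      rw [this, one_mul]
    have hfun : (fun x : ℝ =>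
        Real.sqrt (∑ n ∈ Finset.Icc (1 : ℤ) P, ‖T P n x‖ ^ 2)) =
        fun x : ℝ => Real.sqrt (P : ℝ) * ‖T 1 1 x‖ := by
      funext x
      have hsum : ∑ n ∈ Finset.Icc (1 : ℤ) P, ‖T P n x‖ ^ 2 = (P : ℝ) * ‖T 1 1 x‖ ^ 2 := by
        rw [Finset.sum_congr rfl (fun n hn => by
          rw [hnorm n (Finset.mem_Icc.mp hn).1 (Finset.mem_Icc.mp hn).2 x]),
          Finset.sum_const, Int.card_Icc]
        have : ((P + 1 - 1).toNat : ℝ) = (P : ℝ) := by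
          rw [show P + 1 - 1 = P by ring]
          exact_mod_cast congrArg (Int.cast : ℤ → ℝ) (Int.toNat_of_nonneg (by linarith))
        rw [nsmul_eq_mul, this]
      rw [hsum, Real.sqrt_mul (by exact_mod_cast (by linarith : (0:ℤ) ≤ P)),
        Real.sqrt_sq (norm_nonneg _)]
    rw [hfun]
    have : (fun x : ℝ => Real.sqrt (P : ℝ) * ‖T 1 1 x‖) =
        (Real.sqrt (P : ℝ)) • (fun x : ℝ => ‖T 1 1 x‖) := rfl
    rw [this, eLpNorm_const_smul, eLpNorm_norm]
    congr 1
    simp [Real.nnnorm_of_nonneg (Real.sqrt_nonneg _), ENNReal.ofReal,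
      Real.toNNReal_of_nonneg (Real.sqrt_nonneg _), Real.enorm_of_nonneg (Real.sqrt_nonneg _)]
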